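/- arXiv:2108.12942 — 3 statements merged into one kernel-verified Lean document; each statement's English description precedes it below -/
import Mathlib

section
/- Let a : ℝ → ℝ be continuous, 1-periodic, with 0 < α ≤ a(y) ≤ β for all y. Then as ε → 0 along the sequence ε = 1/n, the functions x ↦ 1/a(x/ε) converge weakly in L²(0,1) to the constant ∫₀¹ 1/a(y) dy; equivalently, for every continuous g on [0,1], ∫₀¹ g(x)/a(x/ε) dx → (∫₀¹ 1/a(y) dy)(∫₀¹ g(x) dx). -/
open Real Filter MeasureTheory intervalIntegral

theorem weak_convergence_oscillating_inverse
    (a : ℝ → ℝ) (ha_cont : Continuous a) (ha_per : Function.Periodic a 1)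
    (α β : ℝ) (hα : 0 < α) (hab : ∀ y, α ≤ a y ∧ a y ≤ β)
    (g : ℝ → ℝ) (hg : ContinuousOn g (Set.Icc 0 1)) :
    Tendsto (fun n : ℕ => ∫ x in (0:ℝ)..1, g x / a (x * n)) atTop
      (nhds ((∫ y in (0:ℝ)..1, (a y)⁻¹) * ∫ x in (0:ℝ)..1, g x)) := by
  have ha_pos : ∀ y, 0 < a y := fun y => lt_of_lt_of_le hα (hab y).1
  have ha_ne : ∀ y, a y ≠ 0 := fun y => (ha_pos y).ne'
  set f : ℝ → ℝ := fun y => (a y)⁻¹ with hfdef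
  have hf_cont : Continuous f := ha_cont.inv₀ ha_ne
  have hf_per : Function.Periodic f 1 := fun x => by simp only [hfdef, ha_per x]
  have hf_bd : ∀ y, |f y| ≤ α⁻¹ := by
    intro y
    rw [abs_of_pos (inv_pos.mpr (ha_pos y))]
    exact inv_anti₀ hα (hab y).1
  set M : ℝ := ∫ y in (0:ℝ)..1, f y with hMdef
  set G : ℝ := ∫ x in (0:ℝ)..1, g x with hGdef
  set C : ℝ := α⁻¹ + |M| with hCdef
  have hC_pos : 0 < C := by positivity
  have hfM_bd : ∀ y, |f y - M| ≤ C := fun y =>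
    (abs_sub _ _).trans (add_le_add_left (hf_bd y) _)
  -- membership of shifted points
  have hmem : ∀ (n k : ℕ), 0 < n → k < n → ∀ y ∈ Set.Icc (0:ℝ) 1,
      (y + k) / n ∈ Set.Icc (0:ℝ) 1 := by
    intro n k hn hk y hy
    have hn' : (0:ℝ) < n := by exact_mod_cast hn
    constructor
    · apply div_nonneg _ hn'.le
      have : (0:ℝ) ≤ k := Nat.cast_nonneg k
      linarith [hy.1]
    · rw [div_le_one hn']
      have : (k:ℝ) + 1 ≤ n := by exact_mod_cast hk
      linarith [hy.2]
  have hmem' : ∀ (n k : ℕ), 0 < n → k < n → (k:ℝ)/n ∈ Set.Icc (0:ℝ) 1 := by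
    intro n k hn hk
    have := hmem n k hn hk 0 (Set.mem_Icc.mpr ⟨le_refl 0, zero_le_one⟩)
    simpa using this
  have hGk_cont : ∀ (n k : ℕ), 0 < n → k < n →
      ContinuousOn (fun y : ℝ => g ((y + k) / n)) (Set.Icc 0 1) :=
    fun n k hn hk => hg.comp (by fun_prop) (fun y hy => hmem n k hn hk y hy)
  -- substitution lemma
  have hsub : ∀ (n k : ℕ), 0 < n → ∀ h : ℝ → ℝ,
      (∫ x in ((k:ℝ)/n)..(((k:ℝ)+1)/n), h (x * n))
        = (n:ℝ)⁻¹ * ∫ y in (0:ℝ)..1, h (y + k) := by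
    intro n k hn h
    have hn0 : (n:ℝ) ≠ 0 := Nat.cast_ne_zero.mpr hn.ne'
    have e1 : (k:ℝ)/n*n = 0 + k := by rw [div_mul_cancel₀ _ hn0]; ring
    have e2 : ((k:ℝ)+1)/n*n = 1 + k := by rw [div_mul_cancel₀ _ hn0]; ring
    rw [integral_comp_mul_right h hn0, integral_comp_add_right h (k:ℝ), e1, e2, smul_eq_mul]
  have hn_cast : ∀ n : ℕ, 0 < n → (n:ℝ) ≠ 0 := fun n hn => Nat.cast_ne_zero.mpr hn.ne'
  -- key identity 1
  have key1 : ∀ (n k : ℕ), 0 < n →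
      (∫ x in ((k:ℝ)/n)..(((k:ℝ)+1)/n), g x * f (x * n))
        = (n:ℝ)⁻¹ * ∫ y in (0:ℝ)..1, g ((y + k) / n) * f y := by
    intro n k hn
    have hn0 := hn_cast n hn
    calc (∫ x in ((k:ℝ)/n)..(((k:ℝ)+1)/n), g x * f (x * n))
        = ∫ x in ((k:ℝ)/n)..(((k:ℝ)+1)/n), (fun u => g (u / n) * f u) (x * n) := by
          apply integral_congr; intro x _
          simp only
          rw [mul_div_cancel_right₀ _ hn0]
      _ = (n:ℝ)⁻¹ * ∫ y in (0:ℝ)..1, g ((y + k) / n) * f (y + k) := hsub n k hn (fun u => g (u / (n:ℝ)) * f u)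
      _ = (n:ℝ)⁻¹ * ∫ y in (0:ℝ)..1, g ((y + k) / n) * f y := by
          congr 1
          apply integral_congr; intro y _
          have hp := (hf_per.nat_mul k) y
          simp only [mul_one] at hp
          simp only [hp]
  -- key identity 2
  have key2 : ∀ (n k : ℕ), 0 < n →
      (∫ x in ((k:ℝ)/n)..(((k:ℝ)+1)/n), g x)
        = (n:ℝ)⁻¹ * ∫ y in (0:ℝ)..1, g ((y + k) / n) := by
    intro n k hn
    have hn0 := hn_cast n hn
    calc (∫ x in ((k:ℝ)/n)..(((k:ℝ)+1)/n), g x)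
        = ∫ x in ((k:ℝ)/n)..(((k:ℝ)+1)/n), (fun u => g (u / n)) (x * n) := by
          apply integral_congr; intro x _
          simp only
          rw [mul_div_cancel_right₀ _ hn0]
      _ = (n:ℝ)⁻¹ * ∫ y in (0:ℝ)..1, g ((y + k) / n) := hsub n k hn (fun u => g (u / (n:ℝ)))
  -- integrability
  have huIcc : Set.uIcc (0:ℝ) 1 = Set.Icc 0 1 := Set.uIcc_of_le zero_le_one
  have hGk_int : ∀ (n k : ℕ), 0 < n → k < n →
      IntervalIntegrable (fun y : ℝ => g ((y + k) / n)) volume 0 1 := by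
    intro n k hn hk
    apply ContinuousOn.intervalIntegrable
    rw [huIcc]; exact hGk_cont n k hn hk
  have hGkf_int : ∀ (n k : ℕ), 0 < n → k < n →
      IntervalIntegrable (fun y : ℝ => g ((y + k) / n) * f y) volume 0 1 := by
    intro n k hn hk
    apply ContinuousOn.intervalIntegrable
    rw [huIcc]; exact (hGk_cont n k hn hk).mul hf_cont.continuousOn
  have hf_int : IntervalIntegrable f volume 0 1 := hf_cont.intervalIntegrable 0 1
  -- key identity 3
  have key3 : ∀ (n k : ℕ), 0 < n → k < n →
      (∫ y in (0:ℝ)..1, g ((y + k) / n) * f y) - M * (∫ y in (0:ℝ)..1, g ((y + k) / n))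
        = ∫ y in (0:ℝ)..1, (g ((y + k) / n) - g ((k:ℝ)/n)) * (f y - M) := by
    intro n k hn hk
    set c : ℝ := g ((k:ℝ)/n) with hcdef
    have e : Set.EqOn (fun y : ℝ => (g ((y + k) / n) - c) * (f y - M))
        (fun y : ℝ => g ((y + k) / n) * f y
          - (M * g ((y + k) / n) + (c * f y - c * M))) (Set.uIcc 0 1) := fun y _ => by ring
    rw [integral_congr e, integral_sub (hGkf_int n k hn hk)
      (((hGk_int n k hn hk).const_mul M).add ((hf_int.const_mul c).sub intervalIntegrable_const)),
      integral_add ((hGk_int n k hn hk).const_mul M)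
        ((hf_int.const_mul c).sub intervalIntegrable_const),
      integral_sub (hf_int.const_mul c) intervalIntegrable_const,
      intervalIntegral.integral_const_mul, intervalIntegral.integral_const_mul, intervalIntegral.integral_const, ← hMdef]
    simp
  -- splitting the interval
  have hpw : ∀ (n : ℕ) (x : ℝ), g x / a (x * n) = g x * f (x * n) := by
    intro n x; rw [div_eq_mul_inv]
  have hsubset : ∀ (n k : ℕ), 0 < n → k < n →
      Set.uIcc ((k:ℝ)/n) (((k:ℝ)+1)/n) ⊆ Set.Icc 0 1 := by
    intro n k hn hk
    have hn' : (0:ℝ) < n := by exact_mod_cast hn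
    have h2 : (k:ℝ)/n ≤ ((k:ℝ)+1)/n := by gcongr; linarith
    rw [Set.uIcc_of_le h2]
    exact Set.Icc_subset_Icc (hmem' n k hn hk).1
      (by rw [div_le_one hn']; exact_mod_cast hk)
  have hpiece_int : ∀ (n k : ℕ), 0 < n → k < n →
      IntervalIntegrable (fun x : ℝ => g x * f (x * n)) volume ((k:ℝ)/n) (((k:ℝ)+1)/n) := by
    intro n k hn hk
    apply ContinuousOn.intervalIntegrable
    exact ((hg.mono (hsubset n k hn hk)).mul (hf_cont.comp (by fun_prop)).continuousOn)
  have hgpiece_int : ∀ (n k : ℕ), 0 < n → k < n →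
      IntervalIntegrable g volume ((k:ℝ)/n) (((k:ℝ)+1)/n) := by
    intro n k hn hk
    exact (hg.mono (hsubset n k hn hk)).intervalIntegrable
  -- splitting
  have split1 : ∀ n : ℕ, 0 < n → (∫ x in (0:ℝ)..1, g x * f (x * n))
      = ∑ k ∈ Finset.range n, ∫ x in ((k:ℝ)/n)..(((k:ℝ)+1)/n), g x * f (x * n) := by
    intro n hn
    have hn0 := hn_cast n hn
    have h := intervalIntegral.sum_integral_adjacent_intervals
      (a := fun k : ℕ => (k:ℝ)/n) (n := n) (f := fun x => g x * f (x * n))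
      (fun k hk => by push_cast; exact hpiece_int n k hn hk)
    simp only [Nat.cast_zero, zero_div, Nat.cast_add, Nat.cast_one, div_self hn0] at h
    exact h.symm
  have split2 : ∀ n : ℕ, 0 < n →
      G = ∑ k ∈ Finset.range n, ∫ x in ((k:ℝ)/n)..(((k:ℝ)+1)/n), g x := by
    intro n hn
    have hn0 := hn_cast n hn
    have h := intervalIntegral.sum_integral_adjacent_intervals
      (a := fun k : ℕ => (k:ℝ)/n) (n := n) (f := g)
      (fun k hk => by push_cast; exact hgpiece_int n k hn hk)
    simp only [Nat.cast_zero, zero_div, Nat.cast_add, Nat.cast_one, div_self hn0] at h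
    rw [hGdef]
    exact h.symm
  -- uniform continuity
  have hUC := (isCompact_Icc.uniformContinuousOn_of_continuous hg)
  rw [Metric.uniformContinuousOn_iff] at hUC
  rw [Metric.tendsto_atTop]
  intro ε hε
  set ε' : ℝ := ε / (2 * C) with hε'def
  have hε' : 0 < ε' := by positivity
  obtain ⟨δ, hδ, hδ'⟩ := hUC ε' hε'
  obtain ⟨N₀, hN₀⟩ := exists_nat_gt δ⁻¹
  refine ⟨max N₀ 1, fun n hn => ?_⟩
  have hn1 : 0 < n := lt_of_lt_of_le Nat.one_pos (le_trans (le_max_right N₀ 1) hn)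
  have hn' : (0:ℝ) < n := by exact_mod_cast hn1
  have hn0 := hn_cast n hn1
  have hinv : (n:ℝ)⁻¹ < δ := by
    have h1 : δ⁻¹ < (n:ℝ) :=
      lt_of_lt_of_le hN₀ (by exact_mod_cast le_trans (le_max_left N₀ 1) hn)
    have := inv_strictAnti₀ (inv_pos.mpr hδ) h1
    rwa [inv_inv] at this
  -- the per-k bound
  have hbound : ∀ k : ℕ, k < n →
      |∫ y in (0:ℝ)..1, (g ((y + k) / n) - g ((k:ℝ)/n)) * (f y - M)| ≤ ε' * C := by
    intro k hk
    have h := intervalIntegral.norm_integral_le_of_norm_le_const (C := ε' * C)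
      (f := fun y : ℝ => (g ((y + k) / n) - g ((k:ℝ)/n)) * (f y - M))
      (a := 0) (b := 1) ?_
    · simpa using h
    · intro y hy
      rw [Set.uIoc_of_le zero_le_one] at hy
      have hy1 : y ∈ Set.Icc (0:ℝ) 1 := ⟨hy.1.le, hy.2⟩
      have hm1 := hmem n k hn1 hk y hy1
      have hm2 := hmem' n k hn1 hk
      have hdist : dist ((y + k) / n) ((k:ℝ)/n) < δ := by
        rw [Real.dist_eq]
        have : (y + (k:ℝ)) / n - (k:ℝ)/n = y / n := by ring
        rw [this, abs_of_nonneg (div_nonneg hy.1.le hn'.le)]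
        calc y / n ≤ 1 / n := by gcongr; exact hy.2
          _ = (n:ℝ)⁻¹ := one_div _
          _ < δ := hinv
      have hgdist := le_of_lt (hδ' _ hm1 _ hm2 hdist)
      rw [Real.dist_eq] at hgdist
      rw [Real.norm_eq_abs, abs_mul]
      exact mul_le_mul hgdist (hfM_bd y) (abs_nonneg _) hε'.le
  -- final estimate
  rw [Real.dist_eq]
  have hrw : (∫ x in (0:ℝ)..1, g x / a (x * n)) = ∫ x in (0:ℝ)..1, g x * f (x * n) := by
    apply integral_congr; intro x _; exact hpw n x
  rw [hrw, split1 n hn1]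
  calc |(∑ k ∈ Finset.range n, ∫ x in ((k:ℝ)/n)..(((k:ℝ)+1)/n), g x * f (x * n)) - M * G|
      = |∑ k ∈ Finset.range n,
          (n:ℝ)⁻¹ * ∫ y in (0:ℝ)..1, (g ((y + k) / n) - g ((k:ℝ)/n)) * (f y - M)| := by
        rw [split2 n hn1, Finset.mul_sum, ← Finset.sum_sub_distrib]
        congr 1
        apply Finset.sum_congr rfl
        intro k hk
        rw [key1 n k hn1, key2 n k hn1, ← mul_assoc, mul_comm M ((n:ℝ)⁻¹), mul_assoc,
          ← mul_sub, key3 n k hn1 (Finset.mem_range.mp hk)]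
    _ ≤ ∑ k ∈ Finset.range n, |(n:ℝ)⁻¹ * ∫ y in (0:ℝ)..1,
          (g ((y + k) / n) - g ((k:ℝ)/n)) * (f y - M)| := Finset.abs_sum_le_sum_abs _ _
    _ ≤ ∑ k ∈ Finset.range n, (n:ℝ)⁻¹ * (ε' * C) := by
        apply Finset.sum_le_sum
        intro k hk
        rw [abs_mul, abs_of_nonneg (inv_nonneg.mpr hn'.le)]
        exact mul_le_mul_of_nonneg_left (hbound k (Finset.mem_range.mp hk))
          (inv_nonneg.mpr hn'.le)
    _ = ε' * C := by
        rw [Finset.sum_const, Finset.card_range, nsmul_eq_mul, ← mul_assoc,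
          mul_inv_cancel₀ hn0, one_mul]
    _ = ε / 2 := by
        rw [hε'def]; field_simp
    _ < ε := by linarith
end

section
/- Under the hypotheses of 1D homogenization with ε = 1/n, the solutions u_ε of -(a(x/ε) u_ε')' = f on (0,1) with u_ε(0)=u_ε(1)=0 converge uniformly on [0,1] (hence in L²) to the solution u₀ of -(a* u₀')' = f with the same boundary conditions, where a* = (∫₀¹ 1/a(y) dy)⁻¹ is the harmonic mean of a. -/
open Real Filter MeasureTheory intervalIntegral Set

/-- A continuous periodic function is bounded. -/
lemma aux_periodic_bound {B : ℝ → ℝ} (hc : Continuous B) (hp : Function.Periodic B 1) :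
    ∃ M : ℝ, 0 ≤ M ∧ ∀ t, |B t| ≤ M := by
  obtain ⟨M, hM⟩ :=
    (isCompact_Icc (a := (0:ℝ)) (b := 1)).exists_bound_of_continuousOn hc.continuousOn
  refine ⟨M, le_trans (abs_nonneg _) (by simpa using hM 0 (by norm_num)), fun t => ?_⟩
  have h1 : B (t - (⌊t⌋ : ℝ) * 1) = B t := hp.sub_int_mul_eq ⌊t⌋
  have h2 : B t = B (Int.fract t) := by
    rw [← h1]; congr 1; rw [mul_one]; rfl
  rw [h2]
  simpa using hM _ ⟨Int.fract_nonneg t, (Int.fract_lt_one t).le⟩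

set_option maxHeartbeats 1000000 in
theorem homogenization_1d_uniform_convergence
    (a : ℝ → ℝ) (ha_cont : Continuous a) (ha_per : Function.Periodic a 1)
    (α β : ℝ) (hα : 0 < α) (hab : ∀ y, α ≤ a y ∧ a y ≤ β)
    (f : ℝ → ℝ) (hf : ContinuousOn f (Set.Icc 0 1))
    (u : ℕ → ℝ → ℝ) (u₀ : ℝ → ℝ)
    (hu_smooth : ∀ n, ContDiffOn ℝ 2 (u n) (Set.Icc 0 1))
    (hu0_smooth : ContDiffOn ℝ 2 u₀ (Set.Icc 0 1))
    (hode : ∀ n : ℕ, 0 < n → ∀ x ∈ Set.Ioo (0:ℝ) 1,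
      HasDerivAt (fun t => a (t * n) * deriv (u n) t) (-f x) x)
    (hbc : ∀ n : ℕ, u n 0 = 0 ∧ u n 1 = 0)
    (hode0 : ∀ x ∈ Set.Ioo (0:ℝ) 1,
      HasDerivAt (fun t => (∫ y in (0:ℝ)..1, (a y)⁻¹)⁻¹ * deriv u₀ t) (-f x) x)
    (hbc0 : u₀ 0 = 0 ∧ u₀ 1 = 0) :
    TendstoUniformlyOn u u₀ atTop (Set.Icc 0 1) := by
  -- ## basic positivity facts
  have ha_pos : ∀ y, 0 < a y := fun y => lt_of_lt_of_le hα (hab y).1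
  have ha_ne : ∀ y, a y ≠ 0 := fun y => (ha_pos y).ne'
  have hβ : 0 < β := lt_of_lt_of_le hα (le_trans (hab 0).1 (hab 0).2)
  have hinv_cont : Continuous fun y => (a y)⁻¹ := ha_cont.inv₀ ha_ne
  have hinv_ub : ∀ y, (a y)⁻¹ ≤ α⁻¹ := fun y => inv_anti₀ hα (hab y).1
  have hinv_lb : ∀ y, β⁻¹ ≤ (a y)⁻¹ := fun y => inv_anti₀ (ha_pos y) (hab y).2
  have hinv_pos : ∀ y, 0 < (a y)⁻¹ := fun y => inv_pos.2 (ha_pos y)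
  set m : ℝ := ∫ y in (0:ℝ)..1, (a y)⁻¹ with hm_def
  set P : ℝ → ℝ := fun x => ∫ t in (0:ℝ)..x, (a t)⁻¹ with hP_def
  set F : ℝ → ℝ := fun x => ∫ t in (0:ℝ)..x, f t with hF_def
  set B : ℝ → ℝ := fun x => P x - m * x with hB_def
  -- ## properties of P, B, m
  have hP_deriv : ∀ x : ℝ, HasDerivAt P ((a x)⁻¹) x := fun x =>
    integral_hasDerivAt_right (hinv_cont.intervalIntegrable 0 x)
      (hinv_cont.stronglyMeasurableAtFilter _ _) hinv_cont.continuousAt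
  have hP_cont : Continuous P :=
    continuous_iff_continuousAt.2 fun x => (hP_deriv x).continuousAt
  have hm_lb : β⁻¹ ≤ m := by
    have h1 : (∫ _t in (0:ℝ)..1, β⁻¹) ≤ ∫ t in (0:ℝ)..1, (a t)⁻¹ :=
      intervalIntegral.integral_mono_on (by norm_num)
        (intervalIntegrable_const) (hinv_cont.intervalIntegrable 0 1)
        (fun x _ => hinv_lb x)
    simpa using h1
  have hm_pos : 0 < m := lt_of_lt_of_le (inv_pos.2 hβ) hm_lb
  have hB_per : Function.Periodic B 1 := by
    intro x
    have hsub : P (x + 1) - P x = ∫ t in x..(x+1), (a t)⁻¹ := by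
      simp only [hP_def]
      exact (intervalIntegral.integral_interval_sub_left (μ := volume)
        (hinv_cont.intervalIntegrable 0 (x+1)) (hinv_cont.intervalIntegrable 0 x))
    have hper' : Function.Periodic (fun y => (a y)⁻¹) 1 := fun y => by simp [ha_per y]
    have h2 : (∫ t in x..(x+1), (a t)⁻¹) = ∫ t in (0:ℝ)..(0+1), (a t)⁻¹ :=
      hper'.intervalIntegral_add_eq x 0
    have h3 : P (x + 1) - P x = m := by rw [hsub, h2]; norm_num [hm_def]
    simp only [hB_def]
    linarith [h3]
  have hB_cont : Continuous B := hP_cont.sub (continuous_const.mul continuous_id)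
  obtain ⟨M, hM0, hMB⟩ := aux_periodic_bound hB_cont hB_per
  -- ## properties of f's primitive F
  obtain ⟨Cf, hCf⟩ := isCompact_Icc.exists_bound_of_continuousOn hf
  have hCf0 : 0 ≤ Cf := le_trans (norm_nonneg _) (hCf 0 (by norm_num))
  have hf_int : ∀ x ∈ Icc (0:ℝ) 1, ∀ y ∈ Icc (0:ℝ) 1, IntervalIntegrable f volume x y := by
    intro x hx y hy
    exact (hf.mono (Set.ordConnected_Icc.uIcc_subset hx hy)).intervalIntegrable
  have hF_bound : ∀ x ∈ Icc (0:ℝ) 1, |F x| ≤ Cf := by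
    intro x hx
    have h1 : ‖∫ t in (0:ℝ)..x, f t‖ ≤ Cf * |x - 0| := by
      apply intervalIntegral.norm_integral_le_of_norm_le_const
      intro t ht
      apply hCf
      have : Set.uIoc (0:ℝ) x ⊆ Icc 0 1 := by
        rw [Set.uIoc_of_le hx.1]
        exact (Set.Ioc_subset_Icc_self).trans (Set.Icc_subset_Icc le_rfl hx.2)
      exact this ht
    have h2 : Cf * |x - 0| ≤ Cf := by
      rw [sub_zero, abs_of_nonneg hx.1]
      nlinarith [hx.2]
    calc |F x| = ‖∫ t in (0:ℝ)..x, f t‖ := rfl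
    _ ≤ Cf * |x - 0| := h1
    _ ≤ Cf := h2
  have hF_cont : ContinuousOn F (Icc 0 1) := by
    have : ContinuousOn F (Set.uIcc 0 1) :=
      intervalIntegral.continuousOn_primitive_interval
        (by rw [Set.uIcc_of_le (by norm_num : (0:ℝ) ≤ 1)]; exact hf.integrableOn_Icc)
    rwa [Set.uIcc_of_le (by norm_num : (0:ℝ) ≤ 1)] at this
  have hF_deriv : ∀ t ∈ Ioo (0:ℝ) 1, HasDerivAt F (f t) t := by
    intro t ht
    exact integral_hasDerivAt_right (hf_int 0 (by norm_num) t (Ioo_subset_Icc_self ht))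
      (ContinuousOn.stronglyMeasurableAtFilter isOpen_Ioo
        (hf.mono Set.Ioo_subset_Icc_self) t ht)
      (hf.continuousAt (Icc_mem_nhds ht.1 ht.2))
  -- ## misc helpers
  have hcomp_cont : ∀ n : ℕ, Continuous fun t : ℝ => (a (t * n))⁻¹ := fun n =>
    hinv_cont.comp (continuous_id.mul continuous_const)
  have hIccsub : ∀ x ∈ Icc (0:ℝ) 1, Icc (0:ℝ) x ⊆ Icc 0 1 := fun x hx =>
    Set.Icc_subset_Icc le_rfl hx.2
  have huIcc : ∀ x ∈ Icc (0:ℝ) 1, Set.uIcc (0:ℝ) x = Icc 0 x := fun x hx =>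
    Set.uIcc_of_le hx.1
  have hFinv_int : ∀ n : ℕ, ∀ x ∈ Icc (0:ℝ) 1,
      IntervalIntegrable (fun t => F t * (a (t * (n:ℝ)))⁻¹) volume 0 x := by
    intro n x hx
    apply ContinuousOn.intervalIntegrable
    rw [huIcc x hx]
    exact (hF_cont.mono (hIccsub x hx)).mul ((hcomp_cont n).continuousOn)
  have hF_int' : ∀ x ∈ Icc (0:ℝ) 1, IntervalIntegrable F volume 0 x := by
    intro x hx
    apply ContinuousOn.intervalIntegrable
    rw [huIcc x hx]
    exact hF_cont.mono (hIccsub x hx)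
  -- ## oscillating integral computation (E1)
  have E1 : ∀ n : ℕ, 0 < n → ∀ x : ℝ,
      (∫ t in (0:ℝ)..x, (a (t * n))⁻¹) = m * x + B (x * n) / n := by
    intro n hn x
    have hn' : (n:ℝ) ≠ 0 := Nat.cast_ne_zero.2 hn.ne'
    have h1 : (∫ t in (0:ℝ)..x, (fun y => (a y)⁻¹) (t * (n:ℝ)))
        = (n:ℝ)⁻¹ • ∫ t in (0:ℝ)*n..x*n, (a t)⁻¹ :=
      intervalIntegral.integral_comp_mul_right (fun y => (a y)⁻¹) hn'
    simp only [zero_mul, smul_eq_mul] at h1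
    rw [h1]
    have h2 : (∫ t in (0:ℝ)..x*n, (a t)⁻¹) = P (x*n) := rfl
    rw [h2]
    have h3 : P (x*(n:ℝ)) = B (x*n) + m * (x*n) := by simp only [hB_def]; ring
    rw [h3]
    field_simp
    ring
  -- ## formula for u n
  set c : ℕ → ℝ := fun n => a ((2⁻¹:ℝ) * n) * deriv (u n) 2⁻¹ + F 2⁻¹ with hc_def
  have step1 : ∀ n : ℕ, 0 < n → ∀ t ∈ Ioo (0:ℝ) 1,
      a (t * n) * deriv (u n) t = c n - F t := by
    intro n hn t ht
    have hhalf : (2⁻¹:ℝ) ∈ Ioo (0:ℝ) 1 := by norm_num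
    have hsub : Set.uIcc (2⁻¹:ℝ) t ⊆ Ioo 0 1 := Set.ordConnected_Ioo.uIcc_subset hhalf ht
    have hint : IntervalIntegrable (fun s => -f s) volume 2⁻¹ t :=
      ((hf.mono (hsub.trans Set.Ioo_subset_Icc_self)).neg).intervalIntegrable
    have key := intervalIntegral.integral_eq_sub_of_hasDerivAt
      (f := fun s => a (s * n) * deriv (u n) s) (f' := fun s => -f s)
      (fun s hs => hode n hn s (hsub hs)) hint
    have h2 : (∫ s in (2⁻¹:ℝ)..t, -f s) = -(F t - F 2⁻¹) := by
      rw [intervalIntegral.integral_neg]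
      simp only [hF_def]
      congr 1
      exact (intervalIntegral.integral_interval_sub_left
        (hf_int 0 (by norm_num) t (Set.Ioo_subset_Icc_self ht))
        (hf_int 0 (by norm_num) 2⁻¹ (Set.Ioo_subset_Icc_self hhalf))).symm
    rw [h2] at key
    simp only [hc_def]
    linarith [key]
  have step2 : ∀ n : ℕ, 0 < n → ∀ x ∈ Icc (0:ℝ) 1,
      u n x = ∫ t in (0:ℝ)..x, (c n - F t) * (a (t * n))⁻¹ := by
    intro n hn x hx
    have hw_cont : ContinuousOn (fun t => (c n - F t) * (a (t * (n:ℝ)))⁻¹) (Icc 0 1) :=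
      (continuousOn_const.sub hF_cont).mul ((hcomp_cont n).continuousOn)
    have hint : IntervalIntegrable (fun t => (c n - F t) * (a (t * (n:ℝ)))⁻¹) volume 0 x := by
      apply ContinuousOn.intervalIntegrable
      rw [huIcc x hx]
      exact hw_cont.mono (hIccsub x hx)
    have hderiv : ∀ t ∈ Ioo (0:ℝ) x,
        HasDerivWithinAt (u n) ((c n - F t) * (a (t * (n:ℝ)))⁻¹) (Ioi t) t := by
      intro t ht
      have ht1 : t ∈ Ioo (0:ℝ) 1 := ⟨ht.1, lt_of_lt_of_le ht.2 hx.2⟩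
      have hdiff : DifferentiableAt ℝ (u n) t :=
        ((hu_smooth n).differentiableOn (by norm_num)).differentiableAt
          (Icc_mem_nhds ht1.1 ht1.2)
      have heq : deriv (u n) t = (c n - F t) * (a (t * (n:ℝ)))⁻¹ := by
        have h := step1 n hn t ht1
        rw [← h]
        field_simp
        rw [mul_div_assoc, div_self (ha_ne _), mul_one]
      rw [← heq]
      exact hdiff.hasDerivAt.hasDerivWithinAt
    have key := intervalIntegral.integral_eq_sub_of_hasDeriv_right_of_le hx.1
      (((hu_smooth n).continuousOn).mono (hIccsub x hx)) hderiv hint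
    rw [key, (hbc n).1, sub_zero]
  -- ## integration by parts estimate (E2)
  have E2 : ∀ n : ℕ, 0 < n → ∀ x ∈ Icc (0:ℝ) 1,
      |(∫ t in (0:ℝ)..x, F t * (a (t * n))⁻¹) - m * ∫ t in (0:ℝ)..x, F t|
        ≤ 2 * Cf * M / n := by
    intro n hn x hx
    have hn' : (n:ℝ) ≠ 0 := Nat.cast_ne_zero.2 hn.ne'
    have hnpos : (0:ℝ) < n := by exact_mod_cast hn
    set G : ℝ → ℝ := fun t => P (t * n) / n with hG_def
    have hG_deriv : ∀ t : ℝ, HasDerivAt G ((a (t * (n:ℝ)))⁻¹) t := by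
      intro t
      have h1 : HasDerivAt (fun s : ℝ => s * n) ((n:ℝ)) t := by
        simpa using (hasDerivAt_id t).mul_const (n:ℝ)
      have h2 : HasDerivAt (fun s : ℝ => P (s * n)) ((a (t * (n:ℝ)))⁻¹ * n) t :=
        by have := (hP_deriv (t * n)).comp t h1; exact this
      have h3 := h2.div_const (n:ℝ)
      have h4 : (a (t * (n:ℝ)))⁻¹ * n / n = (a (t * (n:ℝ)))⁻¹ :=
        mul_div_cancel_right₀ _ hn'
      rw [h4] at h3
      exact h3
    have hG_cont : Continuous G :=
      (hP_cont.comp (continuous_id.mul continuous_const)).div_const _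
    have hGm : ∀ t : ℝ, G t - m * t = B (t * n) / n := by
      intro t
      simp only [hG_def, hB_def]
      field_simp
    have hGbound : ∀ t : ℝ, |G t - m * t| ≤ M / n := by
      intro t
      rw [hGm t, abs_div, Nat.abs_cast]
      apply div_le_div_of_nonneg_right ?_ ?_ |>.trans_eq rfl
      · exact hMB _
      · exact hnpos.le
    -- integration by parts for F · (a(tn))⁻¹
    have hFG_cont : ContinuousOn (fun t => F t * G t) (Icc 0 x) :=
      (hF_cont.mono (hIccsub x hx)).mul hG_cont.continuousOn
    have hint1 : IntervalIntegrable (fun t => f t * G t) volume 0 x := by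
      apply ContinuousOn.intervalIntegrable
      rw [huIcc x hx]
      exact (hf.mono (hIccsub x hx)).mul hG_cont.continuousOn
    have hint2 : IntervalIntegrable (fun t => F t * (a (t * (n:ℝ)))⁻¹) volume 0 x :=
      hFinv_int n x hx
    have hpartsA : (∫ t in (0:ℝ)..x, (f t * G t + F t * (a (t * (n:ℝ)))⁻¹))
        = F x * G x - F 0 * G 0 := by
      apply intervalIntegral.integral_eq_sub_of_hasDeriv_right_of_le hx.1 hFG_cont
      · intro t ht
        have ht1 : t ∈ Ioo (0:ℝ) 1 := ⟨ht.1, lt_of_lt_of_le ht.2 hx.2⟩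
        exact ((hF_deriv t ht1).mul (hG_deriv t)).hasDerivWithinAt
      · exact hint1.add hint2
    have hF0 : F 0 = 0 := by simp [hF_def]
    -- integration by parts for F · m
    have hint3 : IntervalIntegrable (fun t => f t * (m * t)) volume 0 x := by
      apply ContinuousOn.intervalIntegrable
      rw [huIcc x hx]
      exact (hf.mono (hIccsub x hx)).mul (continuous_const.mul continuous_id).continuousOn
    have hint4 : IntervalIntegrable (fun t => F t * m) volume 0 x := by
      apply ContinuousOn.intervalIntegrable
      rw [huIcc x hx]
      exact (hF_cont.mono (hIccsub x hx)).mul continuousOn_const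
    have hpartsB : (∫ t in (0:ℝ)..x, (f t * (m * t) + F t * m))
        = F x * (m * x) - F 0 * (m * 0) := by
      apply intervalIntegral.integral_eq_sub_of_hasDeriv_right_of_le hx.1
        ((hF_cont.mono (hIccsub x hx)).mul (continuous_const.mul continuous_id).continuousOn)
      · intro t ht
        have ht1 : t ∈ Ioo (0:ℝ) 1 := ⟨ht.1, lt_of_lt_of_le ht.2 hx.2⟩
        have hm_deriv : HasDerivAt (fun t : ℝ => m * t) m t := by
          simpa using (hasDerivAt_id t).const_mul m
        exact ((hF_deriv t ht1).mul hm_deriv).hasDerivWithinAt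
      · exact hint3.add hint4
    -- split both
    rw [intervalIntegral.integral_add hint1 hint2] at hpartsA
    rw [intervalIntegral.integral_add hint3 hint4] at hpartsB
    -- key identity
    have hmint : m * (∫ t in (0:ℝ)..x, F t) = ∫ t in (0:ℝ)..x, F t * m := by
      rw [← intervalIntegral.integral_const_mul]
      congr 1
      ext t
      ring
    have hdiffint : (∫ t in (0:ℝ)..x, f t * G t) - ∫ t in (0:ℝ)..x, f t * (m * t)
        = ∫ t in (0:ℝ)..x, f t * (G t - m * t) := by
      rw [← intervalIntegral.integral_sub hint1 hint3]
      congr 1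
      ext t
      ring
    have hkey : (∫ t in (0:ℝ)..x, F t * (a (t * (n:ℝ)))⁻¹) - m * ∫ t in (0:ℝ)..x, F t
        = F x * (G x - m * x) - ∫ t in (0:ℝ)..x, f t * (G t - m * t) := by
      rw [hmint, ← hdiffint]
      rw [hF0] at hpartsA hpartsB
      linarith [hpartsA, hpartsB]
    rw [hkey]
    -- bounds
    have hb1 : |F x * (G x - m * x)| ≤ Cf * (M / n) := by
      rw [abs_mul]
      exact mul_le_mul (hF_bound x hx) (hGbound x) (abs_nonneg _) hCf0
    have hb2 : |∫ t in (0:ℝ)..x, f t * (G t - m * t)| ≤ Cf * (M / n) := by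
      have h1 : ‖∫ t in (0:ℝ)..x, f t * (G t - m * t)‖ ≤ Cf * (M / n) * |x - 0| := by
        apply intervalIntegral.norm_integral_le_of_norm_le_const
        intro t ht
        have ht' : t ∈ Icc (0:ℝ) 1 := by
          rw [Set.uIoc_of_le hx.1] at ht
          exact (hIccsub x hx) (Set.Ioc_subset_Icc_self ht)
        rw [Real.norm_eq_abs, abs_mul]
        exact mul_le_mul (by simpa using hCf t ht') (hGbound t) (abs_nonneg _) hCf0
      have h2 : Cf * (M / n) * |x - 0| ≤ Cf * (M / n) := by
        rw [sub_zero, abs_of_nonneg hx.1]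
        have : 0 ≤ Cf * (M / n) := by positivity
        nlinarith [hx.2]
      exact (h1.trans h2)
    calc |F x * (G x - m * x) - ∫ t in (0:ℝ)..x, f t * (G t - m * t)|
        ≤ |F x * (G x - m * x)| + |∫ t in (0:ℝ)..x, f t * (G t - m * t)| := abs_sub _ _
      _ ≤ Cf * (M / n) + Cf * (M / n) := add_le_add hb1 hb2
      _ = 2 * Cf * M / n := by ring
  -- ## formula for u₀
  set K : ℝ := ∫ t in (0:ℝ)..1, F t with hK_def
  have hK_bound : |K| ≤ Cf := by
    have h1 : ‖∫ t in (0:ℝ)..1, F t‖ ≤ Cf * |1 - 0| := by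
      apply intervalIntegral.norm_integral_le_of_norm_le_const
      intro t ht
      have ht' : t ∈ Icc (0:ℝ) 1 := by
        rw [Set.uIoc_of_le (by norm_num : (0:ℝ) ≤ 1)] at ht
        exact Ioc_subset_Icc_self ht
      simpa using hF_bound t ht'
    simpa using h1
  have hu0_formula : ∀ x ∈ Icc (0:ℝ) 1, u₀ x = m * K * x - m * ∫ t in (0:ℝ)..x, F t := by
    set c0 : ℝ := m⁻¹ * deriv u₀ 2⁻¹ + F 2⁻¹ with hc0_def
    have step10 : ∀ t ∈ Ioo (0:ℝ) 1, m⁻¹ * deriv u₀ t = c0 - F t := by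
      intro t ht
      have hhalf : (2⁻¹:ℝ) ∈ Ioo (0:ℝ) 1 := by norm_num
      have hsub : Set.uIcc (2⁻¹:ℝ) t ⊆ Ioo 0 1 := Set.ordConnected_Ioo.uIcc_subset hhalf ht
      have hint : IntervalIntegrable (fun s => -f s) volume 2⁻¹ t :=
        ((hf.mono (hsub.trans Set.Ioo_subset_Icc_self)).neg).intervalIntegrable
      have key := intervalIntegral.integral_eq_sub_of_hasDerivAt
        (f := fun s => m⁻¹ * deriv u₀ s) (f' := fun s => -f s)
        (fun s hs => hode0 s (hsub hs)) hint
      have h2 : (∫ s in (2⁻¹:ℝ)..t, -f s) = -(F t - F 2⁻¹) := by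
        rw [intervalIntegral.integral_neg]
        simp only [hF_def]
        congr 1
        exact (intervalIntegral.integral_interval_sub_left
          (hf_int 0 (by norm_num) t (Set.Ioo_subset_Icc_self ht))
          (hf_int 0 (by norm_num) 2⁻¹ (Set.Ioo_subset_Icc_self hhalf))).symm
      rw [h2] at key
      simp only [hc0_def]
      linarith [key]
    have hd0 : ∀ t ∈ Ioo (0:ℝ) 1, deriv u₀ t = m * (c0 - F t) := by
      intro t ht
      have h := step10 t ht
      rw [← h]
      field_simp
    have hform : ∀ x ∈ Icc (0:ℝ) 1, u₀ x = m * c0 * x - m * ∫ t in (0:ℝ)..x, F t := by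
      intro x hx
      have hint : IntervalIntegrable (fun t => m * (c0 - F t)) volume 0 x := by
        apply ContinuousOn.intervalIntegrable
        rw [huIcc x hx]
        exact continuousOn_const.mul (continuousOn_const.sub (hF_cont.mono (hIccsub x hx)))
      have hderiv : ∀ t ∈ Ioo (0:ℝ) x,
          HasDerivWithinAt u₀ (m * (c0 - F t)) (Ioi t) t := by
        intro t ht
        have ht1 : t ∈ Ioo (0:ℝ) 1 := ⟨ht.1, lt_of_lt_of_le ht.2 hx.2⟩
        have hdiff : DifferentiableAt ℝ u₀ t :=
          (hu0_smooth.differentiableOn (by norm_num)).differentiableAt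
            (Icc_mem_nhds ht1.1 ht1.2)
        rw [← hd0 t ht1]
        exact hdiff.hasDerivAt.hasDerivWithinAt
      have key := intervalIntegral.integral_eq_sub_of_hasDeriv_right_of_le hx.1
        (hu0_smooth.continuousOn.mono (hIccsub x hx)) hderiv hint
      rw [hbc0.1, sub_zero] at key
      rw [← key]
      rw [intervalIntegral.integral_const_mul,
        intervalIntegral.integral_sub intervalIntegrable_const (hF_int' x hx),
        intervalIntegral.integral_const]
      simp only [smul_eq_mul, sub_zero]
      ring
    have hc0K : c0 = K := by
      have h1 := hform 1 (by norm_num)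
      rw [hbc0.2] at h1
      have h2 : m * c0 = m * K := by
        simp only [hK_def] at h1 ⊢
        linarith [h1]
      exact mul_left_cancel₀ hm_pos.ne' h2
    intro x hx
    rw [← hc0K]
    exact hform x hx
  -- ## identification of the constants c n
  have hIn_lb : ∀ n : ℕ, 0 < n → β⁻¹ ≤ ∫ t in (0:ℝ)..1, (a (t * n))⁻¹ := by
    intro n hn
    have h1 : (∫ _t in (0:ℝ)..1, β⁻¹) ≤ ∫ t in (0:ℝ)..1, (a (t * (n:ℝ)))⁻¹ :=
      intervalIntegral.integral_mono_on (by norm_num) intervalIntegrable_const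
        ((hcomp_cont n).intervalIntegrable 0 1) (fun s _ => hinv_lb _)
    simpa using h1
  have hJ_bound : ∀ n : ℕ, ∀ x ∈ Icc (0:ℝ) 1,
      |∫ t in (0:ℝ)..x, F t * (a (t * (n:ℝ)))⁻¹| ≤ Cf * α⁻¹ := by
    intro n x hx
    have h1 : ‖∫ t in (0:ℝ)..x, F t * (a (t * (n:ℝ)))⁻¹‖ ≤ Cf * α⁻¹ * |x - 0| := by
      apply intervalIntegral.norm_integral_le_of_norm_le_const
      intro t ht
      have ht' : t ∈ Icc (0:ℝ) 1 := by
        rw [Set.uIoc_of_le hx.1] at ht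
        exact (hIccsub x hx) (Set.Ioc_subset_Icc_self ht)
      rw [Real.norm_eq_abs, abs_mul]
      apply mul_le_mul (hF_bound t ht') ?_ (abs_nonneg _) hCf0
      rw [abs_of_pos (hinv_pos _)]
      exact hinv_ub _
    have h2 : Cf * α⁻¹ * |x - 0| ≤ Cf * α⁻¹ := by
      rw [sub_zero, abs_of_nonneg hx.1]
      have h0 : 0 ≤ Cf * α⁻¹ := by positivity
      nlinarith [hx.2]
    exact (h1.trans h2)
  have hbcn : ∀ n : ℕ, 0 < n →
      c n * (∫ t in (0:ℝ)..1, (a (t * (n:ℝ)))⁻¹) = ∫ t in (0:ℝ)..1, F t * (a (t * (n:ℝ)))⁻¹ := by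
    intro n hn
    have h := step2 n hn 1 (by norm_num)
    rw [(hbc n).2] at h
    have i1 : IntervalIntegrable (fun t => c n * (a (t * (n:ℝ)))⁻¹) volume 0 1 :=
      (continuous_const.mul (hcomp_cont n)).intervalIntegrable 0 1
    have i2 : IntervalIntegrable (fun t => F t * (a (t * (n:ℝ)))⁻¹) volume 0 1 :=
      hFinv_int n 1 (by norm_num)
    have hsplit : (∫ t in (0:ℝ)..1, (c n - F t) * (a (t * (n:ℝ)))⁻¹)
        = c n * (∫ t in (0:ℝ)..1, (a (t * (n:ℝ)))⁻¹) - ∫ t in (0:ℝ)..1, F t * (a (t * (n:ℝ)))⁻¹ := by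
      simp only [sub_mul]
      rw [intervalIntegral.integral_sub i1 i2, intervalIntegral.integral_const_mul]
    rw [hsplit] at h
    linarith [h]
  have hc_bound : ∀ n : ℕ, 0 < n → |c n| ≤ Cf * α⁻¹ * β := by
    intro n hn
    have h1 := hbcn n hn
    have h2 := hIn_lb n hn
    have h3 := hJ_bound n 1 (by norm_num)
    have hIpos : 0 < ∫ t in (0:ℝ)..1, (a (t * (n:ℝ)))⁻¹ :=
      lt_of_lt_of_le (inv_pos.2 hβ) h2
    have h5 : |c n| * β⁻¹ ≤ Cf * α⁻¹ := by
      calc |c n| * β⁻¹ ≤ |c n| * ∫ t in (0:ℝ)..1, (a (t * (n:ℝ)))⁻¹ :=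
            mul_le_mul_of_nonneg_left h2 (abs_nonneg _)
        _ = |c n * ∫ t in (0:ℝ)..1, (a (t * (n:ℝ)))⁻¹| := by
            rw [abs_mul, abs_of_pos hIpos]
        _ = |∫ t in (0:ℝ)..1, F t * (a (t * (n:ℝ)))⁻¹| := by rw [h1]
        _ ≤ Cf * α⁻¹ := h3
    calc |c n| = |c n| * β⁻¹ * β := by field_simp
      _ ≤ Cf * α⁻¹ * β := mul_le_mul_of_nonneg_right h5 hβ.le
  have hc_conv : ∀ n : ℕ, 0 < n → |c n - K| ≤ 3 * Cf * M * β / n := by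
    intro n hn
    have hnpos : (0:ℝ) < n := by exact_mod_cast hn
    have h1 := hbcn n hn
    have h2 := hIn_lb n hn
    have hIpos : 0 < ∫ t in (0:ℝ)..1, (a (t * (n:ℝ)))⁻¹ :=
      lt_of_lt_of_le (inv_pos.2 hβ) h2
    -- In = m + B(n)/n
    have hInm : (∫ t in (0:ℝ)..1, (a (t * (n:ℝ)))⁻¹) - m = B ((1:ℝ) * n) / n := by
      rw [E1 n hn 1]
      ring
    have hInm_bound : |(∫ t in (0:ℝ)..1, (a (t * (n:ℝ)))⁻¹) - m| ≤ M / n := by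
      rw [hInm, abs_div, Nat.abs_cast]
      apply div_le_div_of_nonneg_right ?_ ?_ |>.trans_eq rfl
      · exact hMB _
      · exact hnpos.le
    have hE2 := E2 n hn 1 (by norm_num)
    -- |Jn - K In| ≤ 3CfM/n
    have hnum : |(∫ t in (0:ℝ)..1, F t * (a (t * (n:ℝ)))⁻¹)
        - K * ∫ t in (0:ℝ)..1, (a (t * (n:ℝ)))⁻¹| ≤ 3 * Cf * M / n := by
      have hsplit : (∫ t in (0:ℝ)..1, F t * (a (t * (n:ℝ)))⁻¹)
          - K * ∫ t in (0:ℝ)..1, (a (t * (n:ℝ)))⁻¹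
          = ((∫ t in (0:ℝ)..1, F t * (a (t * (n:ℝ)))⁻¹) - m * ∫ t in (0:ℝ)..1, F t)
            - K * ((∫ t in (0:ℝ)..1, (a (t * (n:ℝ)))⁻¹) - m) := by
        simp only [hK_def]
        ring
      rw [hsplit]
      calc |((∫ t in (0:ℝ)..1, F t * (a (t * (n:ℝ)))⁻¹) - m * ∫ t in (0:ℝ)..1, F t)
            - K * ((∫ t in (0:ℝ)..1, (a (t * (n:ℝ)))⁻¹) - m)|
          ≤ |(∫ t in (0:ℝ)..1, F t * (a (t * (n:ℝ)))⁻¹) - m * ∫ t in (0:ℝ)..1, F t|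
            + |K * ((∫ t in (0:ℝ)..1, (a (t * (n:ℝ)))⁻¹) - m)| := abs_sub _ _
        _ ≤ 2 * Cf * M / n + Cf * (M / n) := by
            apply add_le_add hE2
            rw [abs_mul]
            exact mul_le_mul hK_bound hInm_bound (abs_nonneg _) hCf0
        _ = 3 * Cf * M / n := by ring
    -- (c n - K) * In = Jn - K In
    have heq : (c n - K) * (∫ t in (0:ℝ)..1, (a (t * (n:ℝ)))⁻¹)
        = (∫ t in (0:ℝ)..1, F t * (a (t * (n:ℝ)))⁻¹)
          - K * ∫ t in (0:ℝ)..1, (a (t * (n:ℝ)))⁻¹ := by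
      rw [sub_mul, h1]
    have h5 : |c n - K| * β⁻¹ ≤ 3 * Cf * M / n := by
      calc |c n - K| * β⁻¹ ≤ |c n - K| * ∫ t in (0:ℝ)..1, (a (t * (n:ℝ)))⁻¹ :=
            mul_le_mul_of_nonneg_left h2 (abs_nonneg _)
        _ = |(c n - K) * ∫ t in (0:ℝ)..1, (a (t * (n:ℝ)))⁻¹| := by
            rw [abs_mul, abs_of_pos hIpos]
        _ ≤ 3 * Cf * M / n := by rw [heq]; exact hnum
    calc |c n - K| = |c n - K| * β⁻¹ * β := by field_simp
      _ ≤ 3 * Cf * M / n * β := mul_le_mul_of_nonneg_right h5 hβ.le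
      _ = 3 * Cf * M * β / n := by ring
  -- ## final uniform estimate
  have final : ∀ n : ℕ, 0 < n → ∀ x ∈ Icc (0:ℝ) 1,
      |u n x - u₀ x| ≤ (3 * Cf * M * β * m + Cf * α⁻¹ * β * M + 2 * Cf * M) / n := by
    intro n hn x hx
    have hnpos : (0:ℝ) < n := by exact_mod_cast hn
    have i1 : IntervalIntegrable (fun t => c n * (a (t * (n:ℝ)))⁻¹) volume 0 x :=
      (continuous_const.mul (hcomp_cont n)).intervalIntegrable 0 x
    have i2 : IntervalIntegrable (fun t => F t * (a (t * (n:ℝ)))⁻¹) volume 0 x :=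
      hFinv_int n x hx
    have hsplit : u n x = c n * (m * x + B (x * n) / n)
        - ∫ t in (0:ℝ)..x, F t * (a (t * (n:ℝ)))⁻¹ := by
      rw [step2 n hn x hx, ← E1 n hn x]
      simp only [sub_mul]
      rw [intervalIntegral.integral_sub i1 i2, intervalIntegral.integral_const_mul]
    have h2 := E2 n hn x hx
    have h3 := hc_conv n hn
    have h4 := hc_bound n hn
    have hBb : |B (x * (n:ℝ)) / n| ≤ M / n := by
      rw [abs_div, Nat.abs_cast]
      apply div_le_div_of_nonneg_right ?_ ?_ |>.trans_eq rfl
      · exact hMB _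
      · exact hnpos.le
    rw [hsplit, hu0_formula x hx]
    have hA : c n * (m * x + B (x * (n:ℝ)) / n) - (∫ t in (0:ℝ)..x, F t * (a (t * (n:ℝ)))⁻¹)
        - (m * K * x - m * ∫ t in (0:ℝ)..x, F t)
        = (c n - K) * (m * x) + c n * (B (x * (n:ℝ)) / n)
          - ((∫ t in (0:ℝ)..x, F t * (a (t * (n:ℝ)))⁻¹) - m * ∫ t in (0:ℝ)..x, F t) := by
      ring
    rw [hA]
    have habs : ∀ p q r : ℝ, |p + q - r| ≤ |p| + |q| + |r| := by
      intro p q r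
      calc |p + q - r| = |(p + q) + (-r)| := by ring_nf
        _ ≤ |p + q| + |(-r)| := abs_add_le _ _
        _ ≤ |p| + |q| + |r| := by rw [abs_neg]; linarith [abs_add_le p q]
    have t1 : |(c n - K) * (m * x)| ≤ 3 * Cf * M * β / n * m := by
      rw [abs_mul]
      apply mul_le_mul h3 ?_ (abs_nonneg _) (by positivity)
      rw [abs_of_nonneg (mul_nonneg hm_pos.le hx.1)]
      nlinarith [hx.2, hm_pos]
    have t2 : |c n * (B (x * (n:ℝ)) / n)| ≤ Cf * α⁻¹ * β * (M / n) := by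
      rw [abs_mul]
      exact mul_le_mul h4 hBb (abs_nonneg _) (by positivity)
    calc |(c n - K) * (m * x) + c n * (B (x * (n:ℝ)) / n)
          - ((∫ t in (0:ℝ)..x, F t * (a (t * (n:ℝ)))⁻¹) - m * ∫ t in (0:ℝ)..x, F t)|
        ≤ |(c n - K) * (m * x)| + |c n * (B (x * (n:ℝ)) / n)|
          + |(∫ t in (0:ℝ)..x, F t * (a (t * (n:ℝ)))⁻¹) - m * ∫ t in (0:ℝ)..x, F t| :=
          habs _ _ _
      _ ≤ 3 * Cf * M * β / n * m + Cf * α⁻¹ * β * (M / n) + 2 * Cf * M / n :=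
          add_le_add (add_le_add t1 t2) h2
      _ = (3 * Cf * M * β * m + Cf * α⁻¹ * β * M + 2 * Cf * M) / n := by ring
  -- ## conclusion
  set CC : ℝ := 3 * Cf * M * β * m + Cf * α⁻¹ * β * M + 2 * Cf * M with hCC_def
  rw [Metric.tendstoUniformlyOn_iff]
  intro ε hε
  have h1 : Tendsto (fun n : ℕ => CC / n) atTop (nhds 0) :=
    tendsto_const_div_atTop_nhds_zero_nat CC
  have h2 : ∀ᶠ n : ℕ in atTop, CC / n < ε := h1.eventually (gt_mem_nhds hε)
  filter_upwards [h2, eventually_ge_atTop 1] with n hn hn1 x hx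
  rw [Real.dist_eq]
  have h3 := final n hn1 x hx
  calc |u₀ x - u n x| = |u n x - u₀ x| := abs_sub_comm _ _
  _ ≤ CC / n := h3
  _ < ε := hn
end

section
/- Let a : ℝ → ℝ be continuous, 1-periodic, with 0 < α ≤ a ≤ β, and let f be continuous on [0,1]. Define u_ε as the solution of -(a(x/ε)u_ε')' = f with u_ε(0)=u_ε(1)=0 and u₀ as the solution with a replaced by the harmonic mean a*. Then there exists a constant C depending only on α, β, and ‖f‖_∞ such that sup_{x∈[0,1]} |u_ε(x) - u₀(x)| ≤ C ε for all ε = 1/n, n ∈ ℕ. -/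
open Real intervalIntegral MeasureTheory

open Real intervalIntegral MeasureTheory

lemma const_on_Ioo_of_deriv_zero {h : ℝ → ℝ}
    (hd : ∀ x ∈ Set.Ioo (0:ℝ) 1, HasDerivAt h 0 x) :
    ∀ x ∈ Set.Ioo (0:ℝ) 1, ∀ y ∈ Set.Ioo (0:ℝ) 1, h x = h y := by
  have key : ∀ x y : ℝ, x ∈ Set.Ioo (0:ℝ) 1 → y ∈ Set.Ioo (0:ℝ) 1 → x ≤ y → h x = h y := by
    intro x y hx hy hxy
    have h0 : (∫ t in x..y, (0:ℝ)) = h y - h x := by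
      apply intervalIntegral.integral_eq_sub_of_hasDerivAt
      · intro t ht
        rw [Set.uIcc_of_le hxy] at ht
        exact hd t ⟨lt_of_lt_of_le hx.1 ht.1, lt_of_le_of_lt ht.2 hy.2⟩
      · exact intervalIntegrable_const
    simp only [intervalIntegral.integral_zero] at h0
    linarith
  intro x hx y hy
  rcases le_total x y with hxy | hxy
  · exact key x y hx hy hxy
  · exact (key y x hy hx hxy).symm

lemma endpoints_of_const_on_Ioo {h : ℝ → ℝ} {c : ℝ}
    (hc : ContinuousOn h (Set.Icc (0:ℝ) 1))
    (he : ∀ x ∈ Set.Ioo (0:ℝ) 1, h x = c) :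
    h 0 = c ∧ h 1 = c := by
  have hsub : Set.Ioo (0:ℝ) 1 ⊆ Set.Icc 0 1 := Set.Ioo_subset_Icc_self
  have hconst : ∀ z ∈ Set.Icc (0:ℝ) 1, z ∈ closure (Set.Ioo (0:ℝ) 1) → h z = c := by
    intro z hz hzc
    have h1 : Filter.Tendsto h (nhdsWithin z (Set.Ioo 0 1)) (nhds (h z)) :=
      ((hc z hz).mono hsub).tendsto
    have h2 : Filter.Tendsto h (nhdsWithin z (Set.Ioo 0 1)) (nhds c) := by
      apply Filter.Tendsto.congr' _ tendsto_const_nhds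
      filter_upwards [self_mem_nhdsWithin] with t ht
      exact (he t ht).symm
    have : Filter.NeBot (nhdsWithin z (Set.Ioo (0:ℝ) 1)) :=
      mem_closure_iff_nhdsWithin_neBot.mp hzc
    exact tendsto_nhds_unique h1 h2
  have hcl : closure (Set.Ioo (0:ℝ) 1) = Set.Icc 0 1 := closure_Ioo one_ne_zero.symm
  constructor
  · exact hconst 0 (by norm_num) (by rw [hcl]; norm_num)
  · exact hconst 1 (by norm_num) (by rw [hcl]; norm_num)

open Real intervalIntegral MeasureTheory

lemma psi_bound (a : ℝ → ℝ) (ha_cont : Continuous a) (ha_per : Function.Periodic a 1)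
    (α : ℝ) (hα : 0 < α) (hge : ∀ y, α ≤ a y) (n : ℕ) (hn : 0 < n) (x : ℝ) :
    |(∫ t in (0:ℝ)..x, (a (t * n))⁻¹) - (∫ y in (0:ℝ)..1, (a y)⁻¹) * x| ≤ (2 / α) / n := by
  have ha_pos : ∀ y, 0 < a y := fun y => lt_of_lt_of_le hα (hge y)
  have ha_ne : ∀ y, a y ≠ 0 := fun y => (ha_pos y).ne'
  have hinv_cont : Continuous fun y => (a y)⁻¹ := ha_cont.inv₀ ha_ne
  have hinv_per : Function.Periodic (fun y => (a y)⁻¹) 1 := fun y => by simp [ha_per y]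
  have hinv_le : ∀ y, (a y)⁻¹ ≤ α⁻¹ := fun y => inv_anti₀ hα (hge y)
  have hinv_nonneg : ∀ y, 0 ≤ (a y)⁻¹ := fun y => (inv_pos.mpr (ha_pos y)).le
  set Ia := ∫ y in (0:ℝ)..1, (a y)⁻¹ with hIa_def
  have hIa_bound : 0 ≤ Ia ∧ Ia ≤ α⁻¹ := by
    constructor
    · apply intervalIntegral.integral_nonneg (by norm_num)
      intro t _; exact hinv_nonneg t
    · calc Ia ≤ ∫ _ in (0:ℝ)..1, α⁻¹ := by
            apply intervalIntegral.integral_mono_on (by norm_num)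
              (hinv_cont.intervalIntegrable 0 1) intervalIntegrable_const
            intro t _; exact hinv_le t
        _ = α⁻¹ := by simp
  set Φ : ℝ → ℝ := fun y => (∫ s in (0:ℝ)..y, (a s)⁻¹) - Ia * y with hΦ_def
  have hΦper : Function.Periodic Φ 1 := by
    intro y
    have hadd : (∫ s in (0:ℝ)..(y+1), (a s)⁻¹)
        = (∫ s in (0:ℝ)..y, (a s)⁻¹) + ∫ s in y..(y+1), (a s)⁻¹ :=
      (intervalIntegral.integral_add_adjacent_intervals
        (hinv_cont.intervalIntegrable 0 y) (hinv_cont.intervalIntegrable y (y+1))).symm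
    have hper : (∫ s in y..(y+1), (a s)⁻¹) = Ia := by
      have := hinv_per.intervalIntegral_add_eq y 0
      simpa using this
    simp only [hΦ_def]
    rw [hadd, hper]; ring
  have hΦ01 : ∀ y ∈ Set.Icc (0:ℝ) 1, |Φ y| ≤ 2 / α := by
    intro y hy
    have h1 : |∫ s in (0:ℝ)..y, (a s)⁻¹| ≤ α⁻¹ := by
      have := intervalIntegral.norm_integral_le_of_norm_le_const
        (C := α⁻¹) (f := fun s => (a s)⁻¹) (a := (0:ℝ)) (b := y) ?_
      · rw [Real.norm_eq_abs] at this
        calc |∫ s in (0:ℝ)..y, (a s)⁻¹| ≤ α⁻¹ * |y - 0| := this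
          _ ≤ α⁻¹ * 1 := by
              apply mul_le_mul_of_nonneg_left _ (inv_nonneg.mpr hα.le)
              rw [sub_zero, abs_of_nonneg hy.1]; exact hy.2
          _ = α⁻¹ := mul_one _
      · intro s _
        rw [Real.norm_eq_abs, abs_of_nonneg (hinv_nonneg s)]
        exact hinv_le s
    have h2 : |Ia * y| ≤ α⁻¹ := by
      rw [abs_mul, abs_of_nonneg hIa_bound.1, abs_of_nonneg hy.1]
      calc Ia * y ≤ α⁻¹ * 1 :=
            mul_le_mul hIa_bound.2 hy.2 hy.1 (inv_nonneg.mpr hα.le)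
        _ = α⁻¹ := mul_one _
    calc |Φ y| ≤ |∫ s in (0:ℝ)..y, (a s)⁻¹| + |Ia * y| := abs_sub _ _
      _ ≤ α⁻¹ + α⁻¹ := add_le_add h1 h2
      _ = 2 / α := by rw [div_eq_mul_inv]; ring
  have hΦall : ∀ y, |Φ y| ≤ 2 / α := by
    intro y
    have heq : Φ y = Φ (Int.fract y) := by
      have := hΦper.sub_int_mul_eq (x := y) ⌊y⌋
      rw [mul_one] at this
      rw [Int.fract]; exact this.symm
    rw [heq]
    exact hΦ01 _ ⟨Int.fract_nonneg y, (Int.fract_lt_one y).le⟩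
  -- substitution
  have hnne : (n:ℝ) ≠ 0 := Nat.cast_ne_zero.mpr hn.ne'
  have hsub : (∫ t in (0:ℝ)..x, (a (t * n))⁻¹) = (n:ℝ)⁻¹ * ∫ s in (0:ℝ)..(x * n), (a s)⁻¹ := by
    have := intervalIntegral.integral_comp_mul_right (a := (0:ℝ)) (b := x)
      (fun s => (a s)⁻¹) hnne
    simpa [smul_eq_mul] using this
  have hkey : (∫ t in (0:ℝ)..x, (a (t * n))⁻¹) - Ia * x = Φ (x * n) / n := by
    rw [hsub, hΦ_def]
    field_simp
  rw [hkey, abs_div, abs_of_nonneg (Nat.cast_nonneg n : (0:ℝ) ≤ n)]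
  gcongr
  exact hΦall _

theorem homogenization_rate_first_order
    (a : ℝ → ℝ) (ha_cont : Continuous a) (ha_per : Function.Periodic a 1)
    (α β : ℝ) (hα : 0 < α) (hab : ∀ y, α ≤ a y ∧ a y ≤ β)
    (f : ℝ → ℝ) (hf : ContinuousOn f (Set.Icc 0 1))
    (u : ℕ → ℝ → ℝ) (u₀ : ℝ → ℝ)
    (hu_smooth : ∀ n, ContDiffOn ℝ 2 (u n) (Set.Icc 0 1))
    (hu0_smooth : ContDiffOn ℝ 2 u₀ (Set.Icc 0 1))
    (hode : ∀ n : ℕ, 0 < n → ∀ x ∈ Set.Ioo (0:ℝ) 1,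
      HasDerivAt (fun t => a (t * n) * deriv (u n) t) (-f x) x)
    (hbc : ∀ n : ℕ, u n 0 = 0 ∧ u n 1 = 0)
    (hode0 : ∀ x ∈ Set.Ioo (0:ℝ) 1,
      HasDerivAt (fun t => (∫ y in (0:ℝ)..1, (a y)⁻¹)⁻¹ * deriv u₀ t) (-f x) x)
    (hbc0 : u₀ 0 = 0 ∧ u₀ 1 = 0) :
    ∃ C : ℝ, 0 < C ∧ ∀ n : ℕ, 0 < n → ∀ x ∈ Set.Icc (0:ℝ) 1,
      |u n x - u₀ x| ≤ C * (1 / n) := by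
  classical
  have ha_pos : ∀ y, 0 < a y := fun y => lt_of_lt_of_le hα (hab y).1
  have ha_ne : ∀ y, a y ≠ 0 := fun y => (ha_pos y).ne'
  have hβ : 0 < β := lt_of_lt_of_le hα (le_trans (hab 0).1 (hab 0).2)
  have hinv_cont : Continuous fun y => (a y)⁻¹ := ha_cont.inv₀ ha_ne
  have hinv_ge : ∀ y, β⁻¹ ≤ (a y)⁻¹ := fun y => inv_anti₀ (ha_pos y) (hab y).2
  have hinv_le : ∀ y, (a y)⁻¹ ≤ α⁻¹ := fun y => inv_anti₀ hα (hab y).1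
  set Ia := ∫ y in (0:ℝ)..1, (a y)⁻¹ with hIa_def
  have hIa_le : Ia ≤ α⁻¹ := by
    calc Ia ≤ ∫ _ in (0:ℝ)..1, α⁻¹ := by
          apply intervalIntegral.integral_mono_on (by norm_num)
            (hinv_cont.intervalIntegrable 0 1) intervalIntegrable_const
          intro t _; exact hinv_le t
      _ = α⁻¹ := by simp
  have hIa_ge : β⁻¹ ≤ Ia := by
    calc (β:ℝ)⁻¹ = ∫ _ in (0:ℝ)..1, β⁻¹ := by simp
      _ ≤ Ia := by
          apply intervalIntegral.integral_mono_on (by norm_num)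
            intervalIntegrable_const (hinv_cont.intervalIntegrable 0 1)
          intro t _; exact hinv_ge t
  have hIa_pos : 0 < Ia := lt_of_lt_of_le (inv_pos.mpr hβ) hIa_ge
  -- extension of f
  set g : ℝ → ℝ := fun x => f (max 0 (min 1 x)) with hg_def
  have hproj : ∀ x : ℝ, max 0 (min 1 x) ∈ Set.Icc (0:ℝ) 1 := by
    intro x
    constructor
    · exact le_max_left _ _
    · exact max_le zero_le_one (min_le_left _ _)
  have hg_cont : Continuous g :=
    hf.comp_continuous (continuous_const.max (continuous_const.min continuous_id)) hproj
  have hg_eq : ∀ x ∈ Set.Icc (0:ℝ) 1, g x = f x := by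
    intro x hx
    simp only [hg_def]
    rw [min_eq_right hx.2, max_eq_right hx.1]
  obtain ⟨M, hM⟩ :=
    (isCompact_Icc : IsCompact (Set.Icc (0:ℝ) 1)).exists_bound_of_continuousOn hf
  have hgM : ∀ x, |g x| ≤ M := by
    intro x
    have := hM _ (hproj x)
    rwa [Real.norm_eq_abs] at this
  have hM0 : 0 ≤ M := le_trans (abs_nonneg _) (hgM 0)
  -- FTC helpers
  have hFTC : ∀ h : ℝ → ℝ, Continuous h →
      ∀ x, HasDerivAt (fun y => ∫ t in (0:ℝ)..y, h t) (h x) x := by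
    intro h hc x
    exact intervalIntegral.integral_hasDerivAt_right (hc.intervalIntegrable 0 x)
      (hc.stronglyMeasurableAtFilter _ _) hc.continuousAt
  have hFTCc : ∀ h : ℝ → ℝ, Continuous h →
      Continuous (fun y => ∫ t in (0:ℝ)..y, h t) := by
    intro h hc
    exact continuous_iff_continuousAt.mpr fun x => (hFTC h hc x).continuousAt
  set F : ℝ → ℝ := fun x => ∫ t in (0:ℝ)..x, g t with hF_def
  have hF : ∀ x, HasDerivAt F (g x) x := hFTC g hg_cont
  have hF_cont : Continuous F := hFTCc g hg_cont
  have hF_bd : ∀ x ∈ Set.Icc (0:ℝ) 1, |F x| ≤ M := by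
    intro x hx
    have h1 := intervalIntegral.norm_integral_le_of_norm_le_const
      (C := M) (f := g) (a := (0:ℝ)) (b := x) (fun t _ => by
        rw [Real.norm_eq_abs]; exact hgM t)
    rw [Real.norm_eq_abs] at h1
    calc |F x| ≤ M * |x - 0| := h1
      _ ≤ M * 1 := by
          apply mul_le_mul_of_nonneg_left _ hM0
          rw [sub_zero, abs_of_nonneg hx.1]; exact hx.2
      _ = M := mul_one _
  -- representation for u n
  have hrep : ∀ n : ℕ, 0 < n → ∃ c : ℝ, ∀ x ∈ Set.Icc (0:ℝ) 1,
      u n x = ∫ t in (0:ℝ)..x, (c - F t) * (a (t * n))⁻¹ := by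
    intro n hn
    have hkc : Continuous fun t : ℝ => (a (t * (n:ℝ)))⁻¹ :=
      (ha_cont.comp (continuous_id.mul continuous_const)).inv₀ (fun t => ha_ne _)
    set c : ℝ := a ((1/2 : ℝ) * n) * deriv (u n) (1/2) + F (1/2) with hc_def
    have hconst : ∀ x ∈ Set.Ioo (0:ℝ) 1, a (x * n) * deriv (u n) x + F x = c := by
      have hz : ∀ x ∈ Set.Ioo (0:ℝ) 1,
          HasDerivAt (fun t => a (t * n) * deriv (u n) t + F t) 0 x := by
        intro x hx
        have h1 := (hode n hn x hx).add (hF x)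
        have h2 : -f x + g x = 0 := by
          rw [hg_eq x (Set.Ioo_subset_Icc_self hx)]; ring
        rwa [h2] at h1
      intro x hx
      exact const_on_Ioo_of_deriv_zero hz x hx (1/2) (by norm_num)
    set k : ℝ → ℝ := fun t => (c - F t) * (a (t * n))⁻¹ with hk_def
    have hk_cont : Continuous k := (continuous_const.sub hF_cont).mul hkc
    set V : ℝ → ℝ := fun x => ∫ t in (0:ℝ)..x, k t with hV_def
    have hderiv_eq : ∀ x ∈ Set.Ioo (0:ℝ) 1, deriv (u n) x = k x := by
      intro x hx
      have h2 : a (x * n) * deriv (u n) x = c - F x := by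
        have := hconst x hx; linarith
      simp only [hk_def]
      rw [← h2, mul_comm (a (x * (n:ℝ))) (deriv (u n) x), mul_assoc,
        mul_inv_cancel₀ (ha_ne _), mul_one]
    have hW : ∀ x ∈ Set.Ioo (0:ℝ) 1, HasDerivAt (fun y => u n y - V y) 0 x := by
      intro x hx
      have hud : HasDerivAt (u n) (deriv (u n) x) x :=
        (((hu_smooth n).differentiableOn (by norm_num)).differentiableAt
          (Icc_mem_nhds hx.1 hx.2)).hasDerivAt
      have h3 := hud.sub (hFTC k hk_cont x)
      rw [hderiv_eq x hx, sub_self] at h3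
      exact h3
    have hWc : ContinuousOn (fun y => u n y - V y) (Set.Icc (0:ℝ) 1) :=
      (hu_smooth n).continuousOn.sub (hFTCc k hk_cont).continuousOn
    have hWconst := const_on_Ioo_of_deriv_zero hW
    have hWIoo : ∀ x ∈ Set.Ioo (0:ℝ) 1,
        (fun y => u n y - V y) x = u n (1/2) - V (1/2) :=
      fun x hx => hWconst x hx (1/2) (by norm_num)
    have hWend := endpoints_of_const_on_Ioo hWc hWIoo
    have hW0 : u n 0 - V 0 = 0 := by
      rw [(hbc n).1]
      simp [hV_def]
    have hWhalf : u n (1/2 : ℝ) - V (1/2) = 0 := by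
      have := hWend.1
      linarith
    refine ⟨c, ?_⟩
    intro x hx
    have hall : u n x - V x = 0 := by
      rcases eq_or_lt_of_le hx.1 with h0 | h0
      · rw [← h0]; exact hW0
      rcases eq_or_lt_of_le hx.2 with h1 | h1
      · rw [h1]
        have := hWend.2
        linarith
      · have := hWIoo x ⟨h0, h1⟩
        simp only at this
        linarith
    have : u n x = V x := by linarith
    rw [this]
  -- representation for u₀
  have hrep0 : ∃ c₀ : ℝ, (∀ x ∈ Set.Icc (0:ℝ) 1,
      u₀ x = ∫ t in (0:ℝ)..x, Ia * (c₀ - F t)) ∧ c₀ = ∫ t in (0:ℝ)..1, F t := by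
    set c₀ : ℝ := Ia⁻¹ * deriv u₀ (1/2) + F (1/2) with hc0_def
    have hconst : ∀ x ∈ Set.Ioo (0:ℝ) 1, Ia⁻¹ * deriv u₀ x + F x = c₀ := by
      have hz : ∀ x ∈ Set.Ioo (0:ℝ) 1,
          HasDerivAt (fun t => Ia⁻¹ * deriv u₀ t + F t) 0 x := by
        intro x hx
        have h1 := (hode0 x hx).add (hF x)
        have h2 : -f x + g x = 0 := by
          rw [hg_eq x (Set.Ioo_subset_Icc_self hx)]; ring
        rwa [h2] at h1
      intro x hx
      exact const_on_Ioo_of_deriv_zero hz x hx (1/2) (by norm_num)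
    set k : ℝ → ℝ := fun t => Ia * (c₀ - F t) with hk_def
    have hk_cont : Continuous k := continuous_const.mul (continuous_const.sub hF_cont)
    set V : ℝ → ℝ := fun x => ∫ t in (0:ℝ)..x, k t with hV_def
    have hderiv_eq : ∀ x ∈ Set.Ioo (0:ℝ) 1, deriv u₀ x = k x := by
      intro x hx
      have h2 : Ia⁻¹ * deriv u₀ x = c₀ - F x := by
        have := hconst x hx; linarith
      simp only [hk_def]
      rw [← h2]
      field_simp
    have hW : ∀ x ∈ Set.Ioo (0:ℝ) 1, HasDerivAt (fun y => u₀ y - V y) 0 x := by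
      intro x hx
      have hud : HasDerivAt u₀ (deriv u₀ x) x :=
        ((hu0_smooth.differentiableOn (by norm_num)).differentiableAt
          (Icc_mem_nhds hx.1 hx.2)).hasDerivAt
      have h3 := hud.sub (hFTC k hk_cont x)
      rw [hderiv_eq x hx, sub_self] at h3
      exact h3
    have hWc : ContinuousOn (fun y => u₀ y - V y) (Set.Icc (0:ℝ) 1) :=
      hu0_smooth.continuousOn.sub (hFTCc k hk_cont).continuousOn
    have hWconst := const_on_Ioo_of_deriv_zero hW
    have hWIoo : ∀ x ∈ Set.Ioo (0:ℝ) 1,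
        (fun y => u₀ y - V y) x = u₀ (1/2) - V (1/2) :=
      fun x hx => hWconst x hx (1/2) (by norm_num)
    have hWend := endpoints_of_const_on_Ioo hWc hWIoo
    have hW0 : u₀ 0 - V 0 = 0 := by
      rw [hbc0.1]
      simp [hV_def]
    have hWhalf : u₀ (1/2 : ℝ) - V (1/2) = 0 := by
      have := hWend.1
      linarith
    have hall : ∀ x ∈ Set.Icc (0:ℝ) 1, u₀ x = V x := by
      intro x hx
      rcases eq_or_lt_of_le hx.1 with h0 | h0
      · rw [← h0]; linarith
      rcases eq_or_lt_of_le hx.2 with h1 | h1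
      · rw [h1]
        have := hWend.2
        linarith
      · have := hWIoo x ⟨h0, h1⟩
        simp only at this
        linarith
    refine ⟨c₀, hall, ?_⟩
    have hV1 : V 1 = 0 := by
      rw [← hall 1 (by norm_num)]; exact hbc0.2
    have hVeval : V 1 = Ia * (c₀ - ∫ t in (0:ℝ)..1, F t) := by
      simp only [hV_def, hk_def]
      rw [intervalIntegral.integral_const_mul,
        intervalIntegral.integral_sub intervalIntegrable_const
          (hF_cont.intervalIntegrable 0 1),
        intervalIntegral.integral_const, sub_zero, one_smul]
    rw [hVeval] at hV1
    have := mul_eq_zero.mp hV1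
    rcases this with h | h
    · exact absurd h hIa_pos.ne'
    · linarith
  obtain ⟨c₀, hu0x, hc₀⟩ := hrep0
  -- u₀ explicit form
  have hu0form : ∀ x ∈ Set.Icc (0:ℝ) 1,
      u₀ x = Ia * (c₀ * x - ∫ t in (0:ℝ)..x, F t) := by
    intro x hx
    rw [hu0x x hx, intervalIntegral.integral_const_mul,
      intervalIntegral.integral_sub intervalIntegrable_const
        (hF_cont.intervalIntegrable 0 x),
      intervalIntegral.integral_const, sub_zero, smul_eq_mul]
    ring
  have hc₀bd : |c₀| ≤ M := by
    rw [hc₀]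
    have h1 := intervalIntegral.norm_integral_le_of_norm_le_const
      (C := M) (f := F) (a := (0:ℝ)) (b := 1) (fun t ht => by
        rw [Real.norm_eq_abs]
        apply hF_bd
        rw [Set.uIoc_of_le (by norm_num : (0:ℝ) ≤ 1)] at ht
        exact Set.Ioc_subset_Icc_self ht)
    rw [Real.norm_eq_abs] at h1
    simpa using h1
  -- the constant
  set C : ℝ := (9 * M * β / α + 3 * M) * (2 / α) + 1 with hC_def
  have hCnn : 0 ≤ (9 * M * β / α + 3 * M) * (2 / α) := by
    apply mul_nonneg
    · apply add_nonneg
      · apply div_nonneg _ hα.le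
        apply mul_nonneg (mul_nonneg (by norm_num) hM0) hβ.le
      · exact mul_nonneg (by norm_num) hM0
    · exact div_nonneg (by norm_num) hα.le
  have hCpos : 0 < C := by rw [hC_def]; linarith
  refine ⟨C, hCpos, ?_⟩
  intro n hn x hx
  obtain ⟨c, hun⟩ := hrep n hn
  have hkc : Continuous fun t : ℝ => (a (t * (n:ℝ)))⁻¹ :=
    (ha_cont.comp (continuous_id.mul continuous_const)).inv₀ (fun t => ha_ne _)
  set ψ : ℝ → ℝ := fun y => (∫ t in (0:ℝ)..y, (a (t * n))⁻¹) - Ia * y with hψ_def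
  set E : ℝ := (2 / α) / n with hE_def
  have hE0 : 0 ≤ E := div_nonneg (div_nonneg (by norm_num) hα.le) (Nat.cast_nonneg n)
  have hE_le : E ≤ 2 / α :=
    div_le_self (div_nonneg (by norm_num) hα.le) (Nat.one_le_cast.mpr hn)
  have hψbd : ∀ y, |ψ y| ≤ E := by
    intro y
    have := psi_bound a ha_cont ha_per α hα (fun z => (hab z).1) n hn y
    rw [← hIa_def] at this
    exact this
  have hψcont : Continuous ψ :=
    (hFTCc _ hkc).sub (continuous_const.mul continuous_id)
  set J : ℝ → ℝ := fun y => ∫ t in (0:ℝ)..y, g t * ψ t with hJ_def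
  have hJbd : ∀ y ∈ Set.Icc (0:ℝ) 1, |J y| ≤ M * E := by
    intro y hy
    have h1 := intervalIntegral.norm_integral_le_of_norm_le_const
      (C := M * E) (f := fun t => g t * ψ t) (a := (0:ℝ)) (b := y) (fun t _ => by
        rw [Real.norm_eq_abs, abs_mul]
        exact mul_le_mul (hgM t) (hψbd t) (abs_nonneg _) hM0)
    rw [Real.norm_eq_abs] at h1
    calc |J y| ≤ M * E * |y - 0| := h1
      _ ≤ M * E * 1 := by
          apply mul_le_mul_of_nonneg_left _ (mul_nonneg hM0 hE0)
          rw [sub_zero, abs_of_nonneg hy.1]; exact hy.2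
      _ = M * E := mul_one _
  -- integration by parts
  have hψderiv : ∀ t : ℝ, HasDerivAt ψ ((a (t * n))⁻¹ - Ia) t := by
    intro t
    have h1 := hFTC (fun s => (a (s * (n:ℝ)))⁻¹) hkc t
    have h2 : HasDerivAt (fun y : ℝ => Ia * y) Ia t := by
      simpa using (hasDerivAt_id t).const_mul Ia
    exact h1.sub h2
  have hibp : ∀ y : ℝ, (∫ t in (0:ℝ)..y, F t * ((a (t * n))⁻¹ - Ia))
      = F y * ψ y - J y := by
    intro y
    have h1 := intervalIntegral.integral_mul_deriv_eq_deriv_mul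
      (u := F) (v := ψ) (u' := g) (v' := fun t => (a (t * n))⁻¹ - Ia)
      (a := (0:ℝ)) (b := y)
      (fun t _ => hF t) (fun t _ => hψderiv t)
      (hg_cont.intervalIntegrable 0 y)
      ((hkc.sub continuous_const).intervalIntegrable 0 y)
    have hF0 : F 0 = 0 := by simp [hF_def]
    have hψ0 : ψ 0 = 0 := by simp [hψ_def]
    rw [hF0, hψ0] at h1
    simpa [hJ_def] using h1
  have hGn : ∀ y : ℝ, (∫ t in (0:ℝ)..y, F t * (a (t * n))⁻¹)
      = Ia * (∫ t in (0:ℝ)..y, F t) + F y * ψ y - J y := by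
    intro y
    have h1 := hibp y
    have h2 : (∫ t in (0:ℝ)..y, F t * ((a (t * n))⁻¹ - Ia))
        = (∫ t in (0:ℝ)..y, F t * (a (t * n))⁻¹) - Ia * ∫ t in (0:ℝ)..y, F t := by
      rw [← intervalIntegral.integral_const_mul,
        ← intervalIntegral.integral_sub (f := fun t => F t * (a (t * n))⁻¹)
          (g := fun t => Ia * F t)
          ((hF_cont.mul hkc).intervalIntegrable 0 y)
          ((continuous_const.mul hF_cont).intervalIntegrable 0 y)]
      congr 1
      ext t
      ring
    linarith
  have hAn : ∀ y : ℝ, (∫ t in (0:ℝ)..y, (a (t * n))⁻¹) = Ia * y + ψ y := by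
    intro y
    simp only [hψ_def]
    ring
  have hsplit : ∀ y : ℝ, (∫ t in (0:ℝ)..y, (c - F t) * (a (t * n))⁻¹)
      = c * (∫ t in (0:ℝ)..y, (a (t * n))⁻¹) - ∫ t in (0:ℝ)..y, F t * (a (t * n))⁻¹ := by
    intro y
    rw [← intervalIntegral.integral_const_mul,
      ← intervalIntegral.integral_sub (f := fun t => c * (a (t * n))⁻¹)
        (g := fun t => F t * (a (t * n))⁻¹)
        ((continuous_const.mul hkc).intervalIntegrable 0 y)
        ((hF_cont.mul hkc).intervalIntegrable 0 y)]
    congr 1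
    ext t
    ring
  -- main identity
  have hunx : u n x = c * (Ia * x + ψ x)
      - (Ia * (∫ t in (0:ℝ)..x, F t) + F x * ψ x - J x) := by
    rw [hun x hx, hsplit x, hGn x, hAn x]
  have hDx : u n x - u₀ x = Ia * x * (c - c₀) + (c - F x) * ψ x + J x := by
    rw [hunx, hu0form x hx]
    ring
  -- boundary identity at 1
  have hbound1 : (c - c₀) * (Ia + ψ 1) = (F 1 - c₀) * ψ 1 - J 1 := by
    have h0 : u n 1 = c * (Ia * 1 + ψ 1)
        - (Ia * (∫ t in (0:ℝ)..1, F t) + F 1 * ψ 1 - J 1) := by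
      rw [hun 1 (by norm_num), hsplit 1, hGn 1, hAn 1]
    rw [(hbc n).2] at h0
    rw [hc₀] at *
    linear_combination -h0
  -- lower bound on A1
  have hA1 : β⁻¹ ≤ Ia + ψ 1 := by
    have h1 : Ia + ψ 1 = ∫ t in (0:ℝ)..1, (a (t * n))⁻¹ := by
      rw [hAn 1]; ring
    rw [h1]
    calc (β:ℝ)⁻¹ = ∫ _ in (0:ℝ)..1, β⁻¹ := by simp
      _ ≤ _ := by
          apply intervalIntegral.integral_mono_on (by norm_num)
            intervalIntegrable_const (hkc.intervalIntegrable 0 1)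
          intro t _; exact hinv_ge _
  -- bound on c - c₀
  have hR : |(F 1 - c₀) * ψ 1 - J 1| ≤ 3 * M * E := by
    have h1 : |(F 1 - c₀) * ψ 1| ≤ 2 * M * E := by
      rw [abs_mul]
      have h2 : |F 1 - c₀| ≤ 2 * M := by
        have := hF_bd 1 (by norm_num)
        have := abs_sub (F 1) c₀
        linarith [abs_sub_abs_le_abs_sub (F 1) c₀, abs_sub (F 1) c₀, hc₀bd,
          hF_bd 1 (by norm_num : (1:ℝ) ∈ Set.Icc (0:ℝ) 1)]
      calc |F 1 - c₀| * |ψ 1| ≤ (2 * M) * E :=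
        mul_le_mul h2 (hψbd 1) (abs_nonneg _) (by linarith)
        _ = 2 * M * E := by ring
    have h3 := hJbd 1 (by norm_num)
    calc |(F 1 - c₀) * ψ 1 - J 1| ≤ |(F 1 - c₀) * ψ 1| + |J 1| := abs_sub _ _
      _ ≤ 2 * M * E + M * E := add_le_add h1 h3
      _ = 3 * M * E := by ring
  have hcc : |c - c₀| ≤ 3 * M * E * β := by
    have hA1pos : 0 < Ia + ψ 1 := lt_of_lt_of_le (inv_pos.mpr hβ) hA1
    have habs : |c - c₀| * (Ia + ψ 1) = |(F 1 - c₀) * ψ 1 - J 1| := by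
      rw [← abs_of_pos hA1pos, ← abs_mul, hbound1]
    have h1 : |c - c₀| * β⁻¹ ≤ |c - c₀| * (Ia + ψ 1) :=
      mul_le_mul_of_nonneg_left hA1 (abs_nonneg _)
    rw [habs] at h1
    have h2 : |c - c₀| = |c - c₀| * β⁻¹ * β := by field_simp
    calc |c - c₀| = |c - c₀| * β⁻¹ * β := h2
      _ ≤ |(F 1 - c₀) * ψ 1 - J 1| * β := mul_le_mul_of_nonneg_right h1 hβ.le
      _ ≤ 3 * M * E * β := mul_le_mul_of_nonneg_right hR hβ.le
  -- final estimate
  have hcFx : |c - F x| ≤ 6 * M * β / α + 2 * M := by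
    have h1 : |c - F x| ≤ |c - c₀| + |c₀| + |F x| := by
      calc |c - F x| = |(c - c₀) + (c₀ - F x)| := by ring_nf
        _ ≤ |c - c₀| + |c₀ - F x| := abs_add_le _ _
        _ ≤ |c - c₀| + (|c₀| + |F x|) := by linarith [abs_sub c₀ (F x)]
        _ = |c - c₀| + |c₀| + |F x| := by ring
    have h2 : 3 * M * E * β ≤ 6 * M * β / α := by
      have h3 : 3 * M * E * β ≤ 3 * M * (2/α) * β := by
        apply mul_le_mul_of_nonneg_right _ hβ.le
        exact mul_le_mul_of_nonneg_left hE_le (by linarith)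
      calc 3 * M * E * β ≤ 3 * M * (2/α) * β := h3
        _ = 6 * M * β / α := by ring
    linarith [hF_bd x hx, hc₀bd, hcc]
  have hterm1 : |Ia * x * (c - c₀)| ≤ α⁻¹ * (3 * M * E * β) := by
    rw [abs_mul]
    have h1 : |Ia * x| ≤ α⁻¹ := by
      rw [abs_mul, abs_of_pos hIa_pos, abs_of_nonneg hx.1]
      calc Ia * x ≤ α⁻¹ * 1 :=
        mul_le_mul hIa_le hx.2 hx.1 (inv_nonneg.mpr hα.le)
        _ = α⁻¹ := mul_one _
    exact mul_le_mul h1 hcc (abs_nonneg _) (inv_nonneg.mpr hα.le)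
  have hterm2 : |(c - F x) * ψ x| ≤ (6 * M * β / α + 2 * M) * E := by
    rw [abs_mul]
    exact mul_le_mul hcFx (hψbd x) (abs_nonneg _) (by positivity)
  have hterm3 : |J x| ≤ M * E := hJbd x hx
  have hsum : |u n x - u₀ x|
      ≤ α⁻¹ * (3 * M * E * β) + (6 * M * β / α + 2 * M) * E + M * E := by
    rw [hDx]
    calc |Ia * x * (c - c₀) + (c - F x) * ψ x + J x|
        ≤ |Ia * x * (c - c₀) + (c - F x) * ψ x| + |J x| := abs_add_le _ _
      _ ≤ |Ia * x * (c - c₀)| + |(c - F x) * ψ x| + |J x| := by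
          linarith [abs_add_le (Ia * x * (c - c₀)) ((c - F x) * ψ x)]
      _ ≤ _ := by linarith
  have hfinal : α⁻¹ * (3 * M * E * β) + (6 * M * β / α + 2 * M) * E + M * E
      ≤ C * (1 / n) := by
    have hE_eq : E = (2 / α) * (1 / n) := by
      rw [hE_def, div_eq_mul_one_div]
    have hid : α⁻¹ * (3 * M * ((2/α) * (1/(n:ℝ))) * β)
        + (6 * M * β / α + 2 * M) * ((2/α) * (1/(n:ℝ))) + M * ((2/α) * (1/(n:ℝ)))
        = ((9 * M * β / α + 3 * M) * (2 / α)) * (1/(n:ℝ)) := by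
      field_simp
      ring
    rw [hE_eq, hid, hC_def]
    have h1n : (0:ℝ) ≤ 1 / n := by positivity
    apply mul_le_mul_of_nonneg_right _ h1n
    linarith
  linarith
end
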